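/- For any two density operators ρ, σ on a finite-dimensional Hilbert space, the trace distance and fidelity satisfy 1 − √F(ρ,σ) ≤ D_t(ρ,σ) ≤ √(1 − F(ρ,σ)), where D_t(ρ,σ) = (1/2)‖ρ−σ‖₁ and F(ρ,σ) = ‖√ρ√σ‖₁². -/

import Mathlib

open Matrix BigOperators Kronecker
open scoped Classical ComplexOrder

/-- The square root of a positive semidefinite matrix, as `Matrix.PosSemidef.sqrt` was defined
in Mathlib (December 2024); it has since been removed from Mathlib. -/
noncomputable def Matrix.PosSemidef.sqrt {n 𝕜 : Type*} [Fintype n] [RCLike 𝕜] [DecidableEq n]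
    {A : Matrix n n 𝕜} (hA : A.PosSemidef) : Matrix n n 𝕜 :=
  hA.1.eigenvectorUnitary.1 * diagonal ((↑) ∘ (√·) ∘ hA.1.eigenvalues) *
    (star hA.1.eigenvectorUnitary : Matrix n n 𝕜)

namespace QCap

/-- Trace norm: `‖A‖₁ = tr √(AᴴA)`. -/
noncomputable def traceNorm {ι : Type*} [Fintype ι] [DecidableEq ι] (A : Matrix ι ι ℂ) : ℝ :=
  ((Matrix.posSemidef_conjTranspose_mul_self A).sqrt.trace).re

/-- Trace distance `D_t(ρ,σ) = ‖ρ-σ‖₁ / 2`. -/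
noncomputable def traceDist {ι : Type*} [Fintype ι] [DecidableEq ι] (ρ σ : Matrix ι ι ℂ) : ℝ :=
  traceNorm (ρ - σ) / 2

/-- von Neumann entropy via eigenvalues, `H(ρ) = -∑ λᵢ log λᵢ`. -/
noncomputable def vnEntropy {ι : Type*} [Fintype ι] [DecidableEq ι] (ρ : Matrix ι ι ℂ) : ℝ :=
  if h : ρ.IsHermitian then ∑ i, Real.negMulLog (h.eigenvalues i) else 0

/-- A density operator: positive semidefinite with unit trace. -/
def IsDensity {ι : Type*} [Fintype ι] (ρ : Matrix ι ι ℂ) : Prop :=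
  ρ.PosSemidef ∧ ρ.trace = 1

/-- Kraus condition `∑ Kᵢᴴ Kᵢ = 1` (trace preservation for a CP map). -/
def IsKraus {ι κ α : Type*} [Fintype ι] [DecidableEq ι] [Fintype κ] [Fintype α]
    (K : κ → Matrix α ι ℂ) : Prop :=
  ∑ k, (K k)ᴴ * K k = 1

/-- Channel action `Φ(ρ) = ∑ Kᵢ ρ Kᵢᴴ`. -/
noncomputable def channelApply {ι κ α : Type*} [Fintype ι] [Fintype κ]
    (K : κ → Matrix α ι ℂ) (ρ : Matrix ι ι ℂ) : Matrix α α ℂ :=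
  ∑ k, K k * ρ * (K k)ᴴ

/-- Choi state `ω_Φ = (Φ ⊗ id)(|ω⟩⟨ω|)` with `|ω⟩ = (1/√d) ∑ᵢ |ii⟩`. -/
noncomputable def choiState {ι κ α : Type*} [Fintype ι] [DecidableEq ι] [Fintype κ]
    (K : κ → Matrix α ι ℂ) : Matrix (α × ι) (α × ι) ℂ :=
  (Fintype.card ι : ℂ)⁻¹ •
    ∑ i : ι, ∑ j : ι,
      (channelApply K (Matrix.single i j 1)) ⊗ₖ (Matrix.single i j 1)

/-- Partial trace over the first tensor factor. -/
noncomputable def ptraceFst {α β : Type*} [Fintype α]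
    (M : Matrix (α × β) (α × β) ℂ) : Matrix β β ℂ :=
  Matrix.of fun i j => ∑ a, M (a, i) (a, j)

/-- Partial trace over the second tensor factor. -/
noncomputable def ptraceSnd {α β : Type*} [Fintype β]
    (M : Matrix (α × β) (α × β) ℂ) : Matrix α α ℂ :=
  Matrix.of fun a b => ∑ i, M (a, i) (b, i)

/-- Fidelity `F(ρ,σ) = (tr √(√ρ σ √ρ))²`. -/
noncomputable def fidelity {ι : Type*} [Fintype ι] [DecidableEq ι] (ρ σ : Matrix ι ι ℂ) : ℝ :=
  if hρ : ρ.PosSemidef then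
    if h : (hρ.sqrt * σ * hρ.sqrt).PosSemidef then ((h.sqrt.trace).re) ^ 2 else 0
  else 0

/-- Coherent information of the channel at the maximally mixed input:
`I(Φ) = H(Φ(π_d)) - H(ω_Φ)`. -/
noncomputable def cohInfo {ι κ α : Type*} [Fintype ι] [DecidableEq ι] [Fintype κ]
    [Fintype α] [DecidableEq α] (K : κ → Matrix α ι ℂ) : ℝ :=
  vnEntropy (channelApply K ((Fintype.card ι : ℂ)⁻¹ • (1 : Matrix ι ι ℂ)))
    - vnEntropy (choiState K)

end QCap

open Matrix
open scoped ComplexOrder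

section Support
variable {ι : Type*} [Fintype ι] [DecidableEq ι] {A : Matrix ι ι ℂ}


noncomputable def herm (hA : A.IsHermitian) (f : ℝ → ℝ) : Matrix ι ι ℂ :=
  (hA.eigenvectorUnitary : Matrix ι ι ℂ) * diagonal (fun i => (f (hA.eigenvalues i) : ℂ)) *
    star (hA.eigenvectorUnitary : Matrix ι ι ℂ)

lemma herm_id (hA : A.IsHermitian) : herm hA (fun x => x) = A := by
  conv_rhs => rw [hA.spectral_theorem]
  rfl

lemma herm_mul (hA : A.IsHermitian) (f g : ℝ → ℝ) :
    herm hA f * herm hA g = herm hA (fun x => f x * g x) := by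
  have h1 : ∀ Z : Matrix ι ι ℂ, star (hA.eigenvectorUnitary : Matrix ι ι ℂ) *
      ((hA.eigenvectorUnitary : Matrix ι ι ℂ) * Z) = Z := fun Z => by
    rw [← mul_assoc, mem_unitaryGroup_iff'.mp hA.eigenvectorUnitary.2, one_mul]
  have hd : (diagonal (fun i => (f (hA.eigenvalues i) : ℂ)) * diagonal (fun i => (g (hA.eigenvalues i) : ℂ)))
      = diagonal (fun i => ((f (hA.eigenvalues i) * g (hA.eigenvalues i) : ℝ) : ℂ)) := by
    rw [diagonal_mul_diagonal]
    congr 1; funext i; push_cast; ring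
  simp only [herm, mul_assoc]
  simp only [h1]
  simp only [← mul_assoc, hd]

lemma herm_congr (hA : A.IsHermitian) {f g : ℝ → ℝ}
    (h : ∀ i, f (hA.eigenvalues i) = g (hA.eigenvalues i)) : herm hA f = herm hA g := by
  unfold herm
  have : (fun i => (f (hA.eigenvalues i) : ℂ)) = (fun i => (g (hA.eigenvalues i) : ℂ)) := by
    funext i; rw [h i]
  rw [this]

lemma herm_conjTranspose (hA : A.IsHermitian) (f : ℝ → ℝ) : (herm hA f)ᴴ = herm hA f := by
  simp only [herm, star_eq_conjTranspose]
  simp only [conjTranspose_mul, conjTranspose_conjTranspose, diagonal_conjTranspose, mul_assoc]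
  congr 2
  funext i
  simp [Pi.star_def]

lemma herm_one (hA : A.IsHermitian) : herm hA (fun _ => 1) = 1 := by
  have h2 : (hA.eigenvectorUnitary : Matrix ι ι ℂ) * star (hA.eigenvectorUnitary : Matrix ι ι ℂ) = 1 :=
    mem_unitaryGroup_iff.mp hA.eigenvectorUnitary.2
  rw [herm]
  have : diagonal (fun _ : ι => ((1:ℝ) : ℂ)) = 1 := by simp [← diagonal_one]
  rw [this, mul_one, h2]

lemma herm_add (hA : A.IsHermitian) (f g : ℝ → ℝ) :
    herm hA f + herm hA g = herm hA (fun x => f x + g x) := by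
  have hd : (diagonal (fun i => (f (hA.eigenvalues i) : ℂ)) + diagonal (fun i => (g (hA.eigenvalues i) : ℂ)))
      = diagonal (fun i => ((f (hA.eigenvalues i) + g (hA.eigenvalues i) : ℝ) : ℂ)) := by
    rw [diagonal_add]
    congr 1; funext i; push_cast; ring
  simp only [herm, ← add_mul, ← mul_add, hd]

lemma herm_posSemidef (hA : A.IsHermitian) {f : ℝ → ℝ}
    (h : ∀ i, 0 ≤ f (hA.eigenvalues i)) : (herm hA f).PosSemidef := by
  have hd : (diagonal (fun i => ((f (hA.eigenvalues i) : ℝ) : ℂ)) : Matrix ι ι ℂ).PosSemidef := by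
    refine PosSemidef.diagonal fun i => ?_
    exact Complex.zero_le_real.mpr (h i)
  simpa only [herm, star_eq_conjTranspose, mul_assoc] using
    (hd.mul_mul_conjTranspose_same (hA.eigenvectorUnitary : Matrix ι ι ℂ))

lemma herm_trace (hA : A.IsHermitian) (f : ℝ → ℝ) :
    (herm hA f).trace = ∑ i, (f (hA.eigenvalues i) : ℂ) := by
  rw [herm, trace_mul_cycle, mem_unitaryGroup_iff'.mp hA.eigenvectorUnitary.2,
    one_mul, trace_diagonal]

lemma herm_isHermitian (hA : A.IsHermitian) (f : ℝ → ℝ) : (herm hA f).IsHermitian :=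
  herm_conjTranspose hA f

lemma herm_sub (hA : A.IsHermitian) (f g : ℝ → ℝ) :
    herm hA f - herm hA g = herm hA (fun x => f x - g x) := by
  have hd : (diagonal (fun i => (f (hA.eigenvalues i) : ℂ)) - diagonal (fun i => (g (hA.eigenvalues i) : ℂ)))
      = diagonal (fun i => ((f (hA.eigenvalues i) - g (hA.eigenvalues i) : ℝ) : ℂ)) := by
    rw [diagonal_sub]
    congr 1; funext i; push_cast; ring
  simp only [herm, ← sub_mul, ← mul_sub, hd]

lemma herm_trace_re (hA : A.IsHermitian) (f : ℝ → ℝ) :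
    ((herm hA f).trace).re = ∑ i, f (hA.eigenvalues i) := by
  rw [herm_trace, Complex.re_sum]
  simp

-- trace of a Hermitian matrix (real part) as sum of eigenvalues
lemma isHermitian_trace_re (hA : A.IsHermitian) : A.trace.re = ∑ i, hA.eigenvalues i := by
  conv_lhs => rw [hA.spectral_theorem]
  have := herm_trace_re hA (fun x => x)
  rw [herm] at this
  exact this

lemma psd_trace_re_nonneg (hA : A.PosSemidef) : 0 ≤ A.trace.re := by
  rw [isHermitian_trace_re hA.1]
  exact Finset.sum_nonneg fun i _ => hA.eigenvalues_nonneg i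

lemma Matrix.PosSemidef.sqrt_eq_herm {C : Matrix ι ι ℂ} (hC : C.PosSemidef) :
    hC.sqrt = herm hC.1 Real.sqrt := rfl

lemma Matrix.PosSemidef.sqrt_mul_self {C : Matrix ι ι ℂ} (hC : C.PosSemidef) :
    hC.sqrt * hC.sqrt = C := by
  rw [hC.sqrt_eq_herm, herm_mul]
  exact (herm_congr hC.1 fun i => Real.mul_self_sqrt (hC.eigenvalues_nonneg i)).trans (herm_id hC.1)

lemma Matrix.PosSemidef.posSemidef_sqrt {C : Matrix ι ι ℂ} (hC : C.PosSemidef) :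
    hC.sqrt.PosSemidef := by
  rw [hC.sqrt_eq_herm]
  exact herm_posSemidef hC.1 fun i => Real.sqrt_nonneg _

open scoped MatrixOrder in
lemma Matrix.PosSemidef.eq_sqrt_of_sq_eq {C : Matrix ι ι ℂ} (hC : C.PosSemidef)
    {D : Matrix ι ι ℂ} (hD : D.PosSemidef) (hCD : C ^ 2 = D) : C = hD.sqrt := by
  have h1 : CFC.sqrt D = C := CFC.sqrt_unique (by rw [← sq, hCD]) hC.nonneg
  have h2 : CFC.sqrt D = hD.sqrt := by
    rw [CFC.sqrt_eq_cfc, cfc_nnreal_eq_real _ D hD.nonneg, hD.1.cfc_eq, IsHermitian.cfc,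
      Unitary.conjStarAlgAut_apply, Matrix.PosSemidef.sqrt]
    unfold Real.sqrt
    rfl
  rw [← h1, h2]

lemma trace_mul_psd_nonneg {B : Matrix ι ι ℂ} (hA : A.PosSemidef) (hB : B.PosSemidef) :
    0 ≤ ((A * B).trace).re := by
  have hss : hA.sqrt * hA.sqrt = A := hA.sqrt_mul_self
  have hsh : hA.sqrtᴴ = hA.sqrt := hA.posSemidef_sqrt.1
  have h1 : (A * B).trace = (hA.sqrt * B * hA.sqrt).trace := by
    rw [show A * B = hA.sqrt * (hA.sqrt * B) from by rw [← mul_assoc, hss]]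
    exact trace_mul_comm _ _
  rw [h1]
  refine psd_trace_re_nonneg ?_
  have := hB.conjTranspose_mul_mul_same hA.sqrt
  rwa [hsh] at this

lemma sqrt_am_gm {a b : ℝ} (ha : 0 ≤ a) (hb : 0 ≤ b) : Real.sqrt (a * b) ≤ (a + b) / 2 := by
  have h : Real.sqrt (a * b) ≤ Real.sqrt (((a + b) / 2) ^ 2) := Real.sqrt_le_sqrt (by nlinarith [sq_nonneg (a - b)])
  rwa [Real.sqrt_sq (by positivity)] at h

lemma fvg_alg {p q t : ℝ} (hp0 : 0 ≤ p) (hp1 : p ≤ 1) (hq0 : 0 ≤ q) (hq1 : q ≤ 1)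
    (ht0 : 0 ≤ t) (ht : t ≤ Real.sqrt (p * q) + Real.sqrt ((1 - p) * (1 - q))) :
    p - q ≤ Real.sqrt (1 - t ^ 2) := by
  set x := Real.sqrt (p * q) with hx
  set y := Real.sqrt ((1 - p) * (1 - q)) with hy
  have hx0 : 0 ≤ x := Real.sqrt_nonneg _
  have hy0 : 0 ≤ y := Real.sqrt_nonneg _
  have hx2 : x ^ 2 = p * q := Real.sq_sqrt (by positivity)
  have hy2 : y ^ 2 = (1 - p) * (1 - q) := Real.sq_sqrt (by nlinarith)
  have hxy : x * y ≤ (p * (1 - p) + q * (1 - q)) / 2 := by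
    have h1 : x * y = Real.sqrt ((p * (1 - p)) * (q * (1 - q))) := by
      rw [hx, hy, ← Real.sqrt_mul (by positivity)]
      ring_nf
    rw [h1]
    exact sqrt_am_gm (by nlinarith) (by nlinarith)
  have htt : t * t ≤ (x + y) * (x + y) := mul_le_mul ht ht ht0 (by positivity)
  have h1 : (p - q) ^ 2 ≤ 1 - t ^ 2 := by nlinarith
  calc p - q ≤ |p - q| := le_abs_self _
    _ = Real.sqrt ((p - q) ^ 2) := (Real.sqrt_sq_eq_abs _).symm
    _ ≤ Real.sqrt (1 - t ^ 2) := Real.sqrt_le_sqrt h1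

lemma herm_zero (hA : A.IsHermitian) : herm hA (fun _ => 0) = 0 := by
  rw [herm]
  have : diagonal (fun _ : ι => ((0:ℝ) : ℂ)) = 0 := by simp
  rw [this, mul_zero, zero_mul]


lemma trace_conjTranspose_mul_self_re (H : Matrix ι ι ℂ) :
    ((Hᴴ * H).trace).re = ∑ p : ι × ι, ‖H p.1 p.2‖ ^ 2 := by
  rw [trace, Fintype.sum_prod_type]
  simp only [diag, mul_apply, conjTranspose_apply]
  rw [Complex.re_sum, Finset.sum_comm]
  congr 1
  funext i
  rw [Complex.re_sum]
  congr 1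
  funext j
  simp [Complex.star_def, ← Complex.normSq_eq_conj_mul_self, Complex.normSq_eq_norm_sq, ← Complex.ofReal_pow]

lemma trace_cs (H G : Matrix ι ι ℂ) :
    ((Gᴴ * H).trace).re ≤ Real.sqrt ((Hᴴ * H).trace.re) * Real.sqrt ((Gᴴ * G).trace.re) := by
  let h : EuclideanSpace ℂ (ι × ι) := WithLp.toLp 2 (fun p : ι × ι => H p.1 p.2)
  let g : EuclideanSpace ℂ (ι × ι) := WithLp.toLp 2 (fun p : ι × ι => G p.1 p.2)
  have hinner : ((Gᴴ * H).trace) = inner ℂ g h := by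
    have h1 : (inner ℂ g h : ℂ) = ∑ p : ι × ι, (starRingEnd ℂ) (G p.1 p.2) * H p.1 p.2 := by
      simp [PiLp.inner_apply, RCLike.inner_apply, g, h, mul_comm]
    rw [h1, trace, Fintype.sum_prod_type]
    simp only [diag, mul_apply, conjTranspose_apply, Complex.star_def]
    rw [Finset.sum_comm]
  have hnh : Real.sqrt ((Hᴴ * H).trace.re) = ‖h‖ := by
    rw [trace_conjTranspose_mul_self_re, EuclideanSpace.norm_eq]
  have hng : Real.sqrt ((Gᴴ * G).trace.re) = ‖g‖ := by
    rw [trace_conjTranspose_mul_self_re, EuclideanSpace.norm_eq]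
  calc ((Gᴴ * H).trace).re = (inner ℂ g h : ℂ).re := by rw [hinner]
    _ ≤ ‖(inner ℂ g h : ℂ)‖ := Complex.re_le_norm _
    _ ≤ ‖g‖ * ‖h‖ := norm_inner_le_norm g h
    _ = Real.sqrt ((Hᴴ * H).trace.re) * Real.sqrt ((Gᴴ * G).trace.re) := by
        rw [hnh, hng]; ring

end Support

section Core
variable {ι : Type*} [Fintype ι] [DecidableEq ι]

set_option maxHeartbeats 2000000 in
theorem fvg_core (A B : Matrix ι ι ℂ) (hA : A.PosSemidef) (hB : B.PosSemidef)
    (htrA : (A * A).trace = 1) (htrB : (B * B).trace = 1)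
    {N : Matrix ι ι ℂ} (hN : N.PosSemidef) (hNeq : N = (B * A)ᴴ * (B * A))
    {Y : Matrix ι ι ℂ} (hY : Y.IsHermitian) (hYeq : Y = A * A - B * B) :
    1 - (herm hN.1 Real.sqrt).trace.re ≤ ((herm hY (fun x => |x|)).trace.re) / 2 ∧
      ((herm hY (fun x => |x|)).trace.re) / 2 ≤
        Real.sqrt (1 - ((herm hN.1 Real.sqrt).trace.re) ^ 2) := by
  have hAh : Aᴴ = A := hA.1
  have hBh : Bᴴ = B := hB.1
  have hNh := hN.1
  have hNe : ∀ i, 0 ≤ hNh.eigenvalues i := hN.eigenvalues_nonneg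
  set M := B * A with hM
  -- functional calculus elements for N
  set absM := herm hNh Real.sqrt with habsM
  set Pi1 := herm hNh (fun x => if x = 0 then 0 else 1) with hPi1
  set Pi0 := herm hNh (fun x => if x = 0 then 1 else 0) with hPi0
  set pinv := herm hNh (fun x => if x = 0 then 0 else (Real.sqrt x)⁻¹) with hpinv
  set rootM := herm hNh (fun x => Real.sqrt (Real.sqrt x)) with hrootM
  set V := M * pinv with hV
  set t := absM.trace.re with htdef
  have ht0 : 0 ≤ t := by
    rw [htdef, habsM, herm_trace_re]
    exact Finset.sum_nonneg fun i _ => Real.sqrt_nonneg _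
  have hNid : herm hNh (fun x => x) = N := herm_id hNh
  have hF1 : absM * absM = N := by
    rw [habsM, herm_mul]
    exact (herm_congr hNh fun i => Real.mul_self_sqrt (hNe i)).trans hNid
  have habsps : absM.PosSemidef := herm_posSemidef hNh fun i => Real.sqrt_nonneg _
  have hF2 : N * Pi0 = 0 := by
    have h : herm hNh (fun x => x) * Pi0 = 0 := by
      rw [hPi0, herm_mul]
      exact (herm_congr hNh fun i => by
        by_cases h : hNh.eigenvalues i = 0 <;> simp [h]).trans (herm_zero hNh)
    rwa [hNid] at h
  have hF3 : M * Pi0 = 0 := by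
    have hPi0h : Pi0ᴴ = Pi0 := herm_conjTranspose hNh _
    have h1 : (M * Pi0)ᴴ * (M * Pi0) = 0 := by
      calc (M * Pi0)ᴴ * (M * Pi0) = Pi0 * (Mᴴ * M) * Pi0 := by
            rw [conjTranspose_mul, hPi0h]; noncomm_ring
        _ = Pi0 * (N * Pi0) := by rw [← hNeq, mul_assoc]
        _ = 0 := by rw [hF2, mul_zero]
    exact conjTranspose_mul_self_eq_zero.mp h1
  have hF4 : Pi1 + Pi0 = 1 := by
    rw [hPi1, hPi0, herm_add, ← herm_one hNh]
    refine herm_congr hNh fun i => ?_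
    by_cases h : hNh.eigenvalues i = 0 <;> simp [h]
  have hF5 : M * Pi1 = M := by
    have h := congrArg (fun Z => M * Z) hF4
    simpa [mul_add, hF3] using h
  have hVh : Vᴴ = pinv * Mᴴ := by
    rw [hV, conjTranspose_mul, hpinv, herm_conjTranspose]
  have sqrt_ne : ∀ i, hNh.eigenvalues i ≠ 0 → Real.sqrt (hNh.eigenvalues i) ≠ 0 := fun i h =>
    ne_of_gt (Real.sqrt_pos.mpr (lt_of_le_of_ne (hNe i) (Ne.symm h)))
  have hF7 : Vᴴ * M = absM := by
    have h : pinv * herm hNh (fun x => x) = absM := by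
      rw [hpinv, herm_mul, habsM]
      refine herm_congr hNh fun i => ?_
      by_cases h : hNh.eigenvalues i = 0
      · simp [h]
      · have hs := sqrt_ne i h
        rw [if_neg h]
        field_simp
        rw [Real.sq_sqrt (hNe i)]
    rw [hNid] at h
    rw [hVh, mul_assoc, ← hNeq]
    exact h
  have hF9 : Vᴴ * V = Pi1 := by
    have h : pinv * (herm hNh (fun x => x) * pinv) = Pi1 := by
      rw [hpinv, herm_mul, herm_mul, hPi1]
      refine herm_congr hNh fun i => ?_
      by_cases h : hNh.eigenvalues i = 0
      · simp [h]
      · have hs := sqrt_ne i h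
        have hx : Real.sqrt (hNh.eigenvalues i) * Real.sqrt (hNh.eigenvalues i) = hNh.eigenvalues i :=
          Real.mul_self_sqrt (hNe i)
        rw [if_neg h, if_neg h]
        field_simp
        rw [Real.sq_sqrt (hNe i)]
    rw [hNid] at h
    rw [hVh, hV, mul_assoc, ← mul_assoc Mᴴ, ← hNeq]
    exact h
  have hF10 : Pi1 * Vᴴ = Vᴴ := by
    rw [hVh, ← mul_assoc, hPi1, hpinv, herm_mul]
    have : herm hNh (fun x => (if x = 0 then (0:ℝ) else 1) * (if x = 0 then 0 else (Real.sqrt x)⁻¹))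
        = herm hNh (fun x => if x = 0 then 0 else (Real.sqrt x)⁻¹) := by
      refine herm_congr hNh fun i => ?_
      by_cases h : hNh.eigenvalues i = 0 <;> simp [h]
    rw [this]
  set Q := V * Vᴴ with hQ
  have hQh : Qᴴ = Q := by rw [hQ, conjTranspose_mul, conjTranspose_conjTranspose]
  have hQQ : Q * Q = Q := by
    calc Q * Q = V * (Vᴴ * V) * Vᴴ := by rw [hQ]; noncomm_ring
      _ = V * (Pi1 * Vᴴ) := by rw [hF9, mul_assoc]
      _ = Q := by rw [hF10, hQ]
  have h1Q : (1 - Q).PosSemidef := by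
    have h : (1 - Q)ᴴ * (1 - Q) = 1 - Q := by
      rw [conjTranspose_sub, conjTranspose_one, hQh]
      calc (1 - Q) * (1 - Q) = 1 - Q - Q + Q * Q := by noncomm_ring
        _ = 1 - Q := by rw [hQQ]; abel
    rw [← h]
    exact posSemidef_conjTranspose_mul_self _
  have hF13 : V * absM = M := by
    have hpa : pinv * absM = Pi1 := by
      rw [hpinv, habsM, herm_mul, hPi1]
      refine herm_congr hNh fun i => ?_
      by_cases h : hNh.eigenvalues i = 0
      · simp [h]
      · have hs := sqrt_ne i h
        rw [if_neg h, if_neg h]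
        field_simp
    rw [hV, mul_assoc, hpa, hF5]
  have hrooth : rootMᴴ = rootM := by rw [hrootM]; exact herm_conjTranspose hNh _
  have hroot2 : rootM * rootM = absM := by
    rw [hrootM, herm_mul, habsM]
    exact herm_congr hNh fun i => Real.mul_self_sqrt (Real.sqrt_nonneg _)
  have hAbsPi : absM * Pi1 = absM := by
    rw [habsM, hPi1, herm_mul]
    refine herm_congr hNh fun i => ?_
    by_cases h : hNh.eigenvalues i = 0 <;> simp [h]
  -- F14 : real part of trace of M is at most t
  have hF14 : (M.trace).re ≤ t := by
    have hcs := trace_cs rootM (rootM * Vᴴ)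
    have h1 : (rootM * Vᴴ)ᴴ * rootM = M := by
      rw [conjTranspose_mul, hrooth, conjTranspose_conjTranspose, mul_assoc, hroot2, hF13]
    have h2 : (rootMᴴ * rootM).trace.re = t := by rw [hrooth, hroot2]
    have h3 : ((rootM * Vᴴ)ᴴ * (rootM * Vᴴ)).trace.re = t := by
      have e1 : ((rootM * Vᴴ)ᴴ * (rootM * Vᴴ)).trace = absM.trace := by
        rw [conjTranspose_mul, hrooth, conjTranspose_conjTranspose, mul_assoc,
          ← mul_assoc rootM, hroot2, trace_mul_comm, mul_assoc, hF9, hAbsPi]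
      rw [e1]
    rw [h1, h2, h3] at hcs
    calc (M.trace).re ≤ Real.sqrt t * Real.sqrt t := hcs
      _ = t := Real.mul_self_sqrt ht0
  -- ===== lower bound =====
  set X := A - B with hX
  have hXh : X.IsHermitian := hA.1.sub hB.1
  set U := herm hXh (fun x => if 0 ≤ x then 1 else -1) with hU
  have hUh : Uᴴ = U := by rw [hU]; exact herm_conjTranspose hXh _
  have hUU : U * U = 1 := by
    rw [hU, herm_mul, ← herm_one hXh]
    refine herm_congr hXh fun i => ?_
    by_cases h : 0 ≤ hXh.eigenvalues i <;> simp [h]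
  set Xp := herm hXh (fun x => max x 0) with hXp
  set Xm := herm hXh (fun x => max (-x) 0) with hXm
  have hXpps : Xp.PosSemidef := herm_posSemidef hXh fun i => le_max_right _ _
  have hXmps : Xm.PosSemidef := herm_posSemidef hXh fun i => le_max_right _ _
  set absX := herm hXh (fun x => |x|) with habsX
  have hXid : herm hXh (fun x => x) = X := herm_id hXh
  have hXpm_add : Xp + Xm = absX := by
    rw [hXp, hXm, herm_add, habsX]
    refine herm_congr hXh fun i => ?_
    rcases le_total 0 (hXh.eigenvalues i) with h | h
    · rw [abs_of_nonneg h, max_eq_left h, max_eq_right (neg_nonpos.mpr h)]; ring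
    · rw [abs_of_nonpos h, max_eq_right h, max_eq_left (neg_nonneg.mpr h)]; ring
  have hXpm_sub : Xp - Xm = X := by
    have hh : Xp - Xm = herm hXh (fun x => x) := by
      rw [hXp, hXm, herm_sub]
      refine herm_congr hXh fun i => ?_
      rcases le_total 0 (hXh.eigenvalues i) with h | h
      · rw [max_eq_left h, max_eq_right (neg_nonpos.mpr h)]; ring
      · rw [max_eq_right h, max_eq_left (neg_nonneg.mpr h)]; ring
    rwa [hXid] at hh
  have hUX : U * X = absX := by
    have hh : U * herm hXh (fun x => x) = absX := by
      rw [hU, herm_mul, habsX]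
      refine herm_congr hXh fun i => ?_
      by_cases h : 0 ≤ hXh.eigenvalues i
      · rw [if_pos h, one_mul, abs_of_nonneg h]
      · rw [if_neg h, neg_one_mul, abs_of_nonpos (le_of_not_ge h)]
    rwa [hXid] at hh
  have hXU : X * U = absX := by
    have hh : herm hXh (fun x => x) * U = absX := by
      rw [hU, herm_mul, habsX]
      refine herm_congr hXh fun i => ?_
      by_cases h : 0 ≤ hXh.eigenvalues i
      · rw [if_pos h, mul_one, abs_of_nonneg h]
      · rw [if_neg h, mul_neg_one, abs_of_nonpos (le_of_not_ge h)]
    rwa [hXid] at hh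
  set absY := herm hY (fun x => |x|) with habsY
  set SY := herm hY (fun x => if 0 ≤ x then 1 else -1) with hSY
  set rootY := herm hY (fun x => Real.sqrt |x|) with hrootY
  have hSYh : SYᴴ = SY := by rw [hSY]; exact herm_conjTranspose hY _
  have hrootYh : rootYᴴ = rootY := by rw [hrootY]; exact herm_conjTranspose hY _
  have hYid : herm hY (fun x => x) = Y := herm_id hY
  have hrootY2 : rootY * rootY = absY := by
    rw [hrootY, herm_mul, habsY]
    exact herm_congr hY fun i => Real.mul_self_sqrt (abs_nonneg _)
  have hSYabs : SY * absY = Y := by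
    have hh : SY * absY = herm hY (fun x => x) := by
      rw [hSY, habsY, herm_mul]
      refine herm_congr hY fun i => ?_
      by_cases h : 0 ≤ hY.eigenvalues i
      · rw [if_pos h, one_mul, abs_of_nonneg h]
      · rw [if_neg h, neg_one_mul, abs_of_nonpos (le_of_not_ge h), neg_neg]
    rwa [hYid] at hh
  have hYSY : Y * SY = absY := by
    have hh : herm hY (fun x => x) * SY = absY := by
      rw [hSY, herm_mul, habsY]
      refine herm_congr hY fun i => ?_
      by_cases h : 0 ≤ hY.eigenvalues i
      · rw [if_pos h, mul_one, abs_of_nonneg h]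
      · rw [if_neg h, mul_neg_one, abs_of_nonpos (le_of_not_ge h)]
    rwa [hYid] at hh
  have trY0 : Y.trace = 0 := by rw [hYeq, trace_sub, htrA, htrB, sub_self]
  set trabsY := absY.trace.re with htrabsY
  have htrabsY0 : 0 ≤ trabsY := by
    rw [htrabsY, habsY, herm_trace_re]
    exact Finset.sum_nonneg fun i _ => abs_nonneg _
  -- duality step
  have hdual : ((U * Y).trace).re ≤ trabsY := by
    have hcs := trace_cs rootY (rootY * SY * U)
    have hGh : (rootY * SY * U)ᴴ = U * (SY * rootY) := by
      rw [conjTranspose_mul, conjTranspose_mul, hUh, hSYh, hrootYh]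
    have h1 : (rootY * SY * U)ᴴ * rootY = U * Y := by
      rw [hGh, mul_assoc, mul_assoc, hrootY2, hSYabs]
    have h2 : (rootYᴴ * rootY).trace.re = trabsY := by rw [hrootYh, hrootY2]
    have h3 : ((rootY * SY * U)ᴴ * (rootY * SY * U)).trace.re = trabsY := by
      have e1 : (rootY * SY * U)ᴴ * (rootY * SY * U) = U * (absY * U) := by
        rw [hGh]
        simp only [mul_assoc]
        rw [← mul_assoc rootY rootY, hrootY2, ← mul_assoc SY absY, hSYabs,
          ← mul_assoc Y SY, hYSY]
      rw [e1, trace_mul_comm, mul_assoc, hUU, mul_one]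
    rw [h1, h2, h3] at hcs
    calc ((U * Y).trace).re ≤ Real.sqrt trabsY * Real.sqrt trabsY := hcs
      _ = trabsY := Real.mul_self_sqrt htrabsY0
  -- trace identity
  have htrUY : (U * Y).trace = (absX * (A + B)).trace := by
    have hiden : X * (A + B) + (A + B) * X = Y + Y := by rw [hYeq, hX]; noncomm_ring
    have e1 : (U * (X * (A + B))).trace = (absX * (A + B)).trace := by
      rw [← mul_assoc, hUX]
    have e2 : (U * ((A + B) * X)).trace = (absX * (A + B)).trace := by
      rw [← mul_assoc, trace_mul_comm, ← mul_assoc, hXU, trace_mul_comm]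
    have h1 : (U * Y).trace + (U * Y).trace = (absX * (A + B)).trace + (absX * (A + B)).trace := by
      calc (U * Y).trace + (U * Y).trace = (U * (Y + Y)).trace := by rw [mul_add, trace_add]
        _ = (U * (X * (A + B))).trace + (U * ((A + B) * X)).trace := by
            rw [← hiden, mul_add, trace_add]
        _ = (absX * (A + B)).trace + (absX * (A + B)).trace := by rw [e1, e2]
    have h2 : (2 : ℂ) * (U * Y).trace = 2 * (absX * (A + B)).trace := by
      rw [two_mul, two_mul, h1]
    exact mul_left_cancel₀ two_ne_zero h2
  have hlower1 : ((X * X).trace).re ≤ ((absX * (A + B)).trace).re := by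
    have hident2 : absX * (A + B) = X * (A - B) + (Xp * B + Xp * B) + (Xm * A + Xm * A) := by
      rw [← hXpm_add, ← hXpm_sub]
      noncomm_ring
    have hXX : X * (A - B) = X * X := by rw [← hX]
    rw [hident2, hXX, trace_add, trace_add, trace_add, trace_add, Complex.add_re,
      Complex.add_re, Complex.add_re, Complex.add_re]
    have g1 := trace_mul_psd_nonneg hXpps hB
    have g2 := trace_mul_psd_nonneg hXmps hA
    linarith
  have htrXX : ((X * X).trace).re = 2 - 2 * (M.trace).re := by
    have h1 : X * X = A * A - (A * B + B * A) + B * B := by rw [hX]; noncomm_ring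
    have h2 : (A * B).trace = M.trace := by rw [hM]; exact trace_mul_comm A B
    rw [h1, trace_add, trace_sub, trace_add, htrA, htrB, h2]
    rw [hM]
    simp [Complex.add_re, Complex.sub_re]
    ring
  have hlow : 1 - t ≤ trabsY / 2 := by
    have hc := congrArg Complex.re htrUY
    linarith [hdual, hlower1, htrXX, hF14, hc]
  -- ===== upper bound =====
  set P := herm hY (fun x => if 0 ≤ x then 1 else 0) with hP
  set P' := herm hY (fun x => if 0 ≤ x then 0 else 1) with hP'
  have hPh : Pᴴ = P := by rw [hP]; exact herm_conjTranspose hY _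
  have hP'h : P'ᴴ = P' := by rw [hP']; exact herm_conjTranspose hY _
  have hPP : P * P = P := by
    rw [hP, herm_mul]
    refine herm_congr hY fun i => ?_
    by_cases h : 0 ≤ hY.eigenvalues i <;> simp [h]
  have hP'P' : P' * P' = P' := by
    rw [hP', herm_mul]
    refine herm_congr hY fun i => ?_
    by_cases h : 0 ≤ hY.eigenvalues i <;> simp [h]
  have hPsum : P + P' = 1 := by
    rw [hP, hP', herm_add, ← herm_one hY]
    refine herm_congr hY fun i => ?_
    by_cases h : 0 ≤ hY.eigenvalues i <;> simp [h]
  have hAAps : (A * A).PosSemidef := by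
    have h := posSemidef_conjTranspose_mul_self A
    rwa [hAh] at h
  have hBBps : (B * B).PosSemidef := by
    have h := posSemidef_conjTranspose_mul_self B
    rwa [hBh] at h
  have hPps : P.PosSemidef := herm_posSemidef hY fun i => by
    by_cases h : 0 ≤ hY.eigenvalues i <;> simp [h]
  have hP'ps : P'.PosSemidef := herm_posSemidef hY fun i => by
    by_cases h : 0 ≤ hY.eigenvalues i <;> simp [h]
  set p := ((P * (A * A)).trace).re with hpdef
  set q := ((P * (B * B)).trace).re with hqdef
  have hp0 : 0 ≤ p := trace_mul_psd_nonneg hPps hAAps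
  have hq0 : 0 ≤ q := trace_mul_psd_nonneg hPps hBBps
  have hpsum : ((P' * (A * A)).trace).re = 1 - p := by
    have h1 : P * (A * A) + P' * (A * A) = A * A := by rw [← add_mul, hPsum, one_mul]
    have h2 := congrArg (fun Z => Z.trace.re) h1
    simp only [trace_add, Complex.add_re, htrA, Complex.one_re] at h2
    linarith
  have hqsum : ((P' * (B * B)).trace).re = 1 - q := by
    have h1 : P * (B * B) + P' * (B * B) = B * B := by rw [← add_mul, hPsum, one_mul]
    have h2 := congrArg (fun Z => Z.trace.re) h1
    simp only [trace_add, Complex.add_re, htrB, Complex.one_re] at h2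
    linarith
  have hp1 : p ≤ 1 := by
    have h := trace_mul_psd_nonneg hP'ps hAAps
    linarith [hpsum]
  have hq1 : q ≤ 1 := by
    have h := trace_mul_psd_nonneg hP'ps hBBps
    linarith [hqsum]
  -- measurement Cauchy-Schwarz
  have key : ∀ E : Matrix ι ι ℂ, Eᴴ = E → E * E = E →
      ((Vᴴ * (B * (E * A))).trace).re ≤
        Real.sqrt (((E * (A * A)).trace).re) * Real.sqrt (((E * (B * B)).trace).re) := by
    intro E hEh hEE
    have hE2 : ∀ Z : Matrix ι ι ℂ, E * (E * Z) = E * Z := fun Z => by rw [← mul_assoc, hEE]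
    have hcs := trace_cs (E * A) (E * (B * V))
    have h1 : (E * (B * V))ᴴ * (E * A) = Vᴴ * (B * (E * A)) := by
      simp only [conjTranspose_mul, hBh, hEh, mul_assoc, hE2]
    have h2 : ((E * A)ᴴ * (E * A)).trace.re = ((E * (A * A)).trace).re := by
      have e : (E * A)ᴴ * (E * A) = A * (E * A) := by
        simp only [conjTranspose_mul, hAh, hEh, mul_assoc, hE2]
      rw [e, trace_mul_comm, mul_assoc]
    have h3 : ((E * (B * V))ᴴ * (E * (B * V))).trace.re ≤ ((E * (B * B)).trace).re := by
      have e : (E * (B * V))ᴴ * (E * (B * V)) = Vᴴ * (B * (E * (B * V))) := by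
        simp only [conjTranspose_mul, hBh, hEh, mul_assoc, hE2]
      have e2 : (Vᴴ * (B * (E * (B * V)))).trace = ((B * (E * B)) * Q).trace := by
        rw [trace_mul_comm, hQ]
        congr 1
        simp only [mul_assoc]
      have hW : (B * (E * B)).PosSemidef := by
        have e3 : (E * B)ᴴ * (E * B) = B * (E * B) := by
          simp only [conjTranspose_mul, hBh, hEh, mul_assoc, hE2]
        rw [← e3]
        exact posSemidef_conjTranspose_mul_self _
      have hWQ : (((B * (E * B)) * Q).trace).re ≤ (((B * (E * B))).trace).re := by
        have h4 : (B * (E * B)) * Q = B * (E * B) - (B * (E * B)) * (1 - Q) := by noncomm_ring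
        rw [h4, trace_sub, Complex.sub_re]
        have h5 := trace_mul_psd_nonneg hW h1Q
        linarith
      have htrW : ((B * (E * B)).trace) = ((E * (B * B)).trace) := by
        rw [trace_mul_comm, mul_assoc]
      rw [e, e2]
      rw [htrW] at hWQ
      exact hWQ
    rw [h1, h2] at hcs
    calc ((Vᴴ * (B * (E * A))).trace).re
        ≤ Real.sqrt (((E * (A * A)).trace).re) *
            Real.sqrt (((E * (B * V))ᴴ * (E * (B * V))).trace.re) := hcs
      _ ≤ Real.sqrt (((E * (A * A)).trace).re) * Real.sqrt (((E * (B * B)).trace).re) := by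
          exact mul_le_mul_of_nonneg_left (Real.sqrt_le_sqrt h3) (Real.sqrt_nonneg _)
  have hsplit : t = ((Vᴴ * (B * (P * A))).trace).re + ((Vᴴ * (B * (P' * A))).trace).re := by
    have h1 : Vᴴ * (B * (P * A)) + Vᴴ * (B * (P' * A)) = Vᴴ * M := by
      rw [← mul_add, ← mul_add, ← add_mul, hPsum, one_mul, hM]
    have h2 : ((Vᴴ * M).trace).re = t := by rw [hF7]
    rw [← h2, ← h1, trace_add, Complex.add_re]
  have hkeyP := key P hPh hPP
  have hkeyP' := key P' hP'h hP'P'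
  rw [hpsum, hqsum] at hkeyP'
  have ht_le : t ≤ Real.sqrt (p * q) + Real.sqrt ((1 - p) * (1 - q)) := by
    rw [Real.sqrt_mul hp0, Real.sqrt_mul (by linarith : (0:ℝ) ≤ 1 - p)]
    rw [hsplit]
    exact add_le_add hkeyP hkeyP'
  have hPY : p - q = trabsY / 2 := by
    have h1 : P * Y = P * (A * A) - P * (B * B) := by rw [hYeq, mul_sub]
    have h2 : ((P * Y).trace).re = p - q := by rw [h1, trace_sub, Complex.sub_re]
    have h3 : ((P * Y).trace).re = trabsY / 2 := by
      have e : P * Y = herm hY (fun x => (|x| + x) / 2) := by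
        have hh : P * herm hY (fun x => x) = herm hY (fun x => (|x| + x) / 2) := by
          rw [hP, herm_mul]
          refine herm_congr hY fun i => ?_
          by_cases h : 0 ≤ hY.eigenvalues i
          · rw [if_pos h, one_mul, abs_of_nonneg h]; ring
          · rw [if_neg h, zero_mul, abs_of_nonpos (le_of_not_ge h)]; ring
        rwa [hYid] at hh

      have hYtr_re : ∑ i, hY.eigenvalues i = 0 := by
        rw [← isHermitian_trace_re hY, trY0, Complex.zero_re]
      rw [e, herm_trace_re]
      have hsum : ∑ i, (|hY.eigenvalues i| + hY.eigenvalues i) / 2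
          = ((∑ i, |hY.eigenvalues i|) + ∑ i, hY.eigenvalues i) / 2 := by
        rw [← Finset.sum_add_distrib, Finset.sum_div]
      rw [hsum, hYtr_re, htrabsY, habsY, herm_trace_re]
      ring
    linarith
  have hup : trabsY / 2 ≤ Real.sqrt (1 - t ^ 2) := by
    rw [← hPY]
    exact fvg_alg hp0 hp1 hq0 hq1 ht0 ht_le
  exact ⟨hlow, hup⟩

end Core


open QCap Matrix in
/-- Fuchs–van de Graaf inequalities. -/
theorem fuchs_van_de_graaf {ι : Type*} [Fintype ι] [DecidableEq ι]
    (ρ σ : Matrix ι ι ℂ) (hρ : IsDensity ρ) (hσ : IsDensity σ) :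
    1 - Real.sqrt (fidelity ρ σ) ≤ traceDist ρ σ ∧
      traceDist ρ σ ≤ Real.sqrt (1 - fidelity ρ σ) := by
  obtain ⟨hρp, hρt⟩ := hρ
  obtain ⟨hσp, hσt⟩ := hσ
  have hAps := hρp.posSemidef_sqrt
  have hBps := hσp.posSemidef_sqrt
  have hAA : hρp.sqrt * hρp.sqrt = ρ := hρp.sqrt_mul_self
  have hBB : hσp.sqrt * hσp.sqrt = σ := hσp.sqrt_mul_self
  have htrA : (hρp.sqrt * hρp.sqrt).trace = 1 := by rw [hAA, hρt]
  have htrB : (hσp.sqrt * hσp.sqrt).trace = 1 := by rw [hBB, hσt]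
  have hN : ((hσp.sqrt * hρp.sqrt)ᴴ * (hσp.sqrt * hρp.sqrt)).PosSemidef :=
    posSemidef_conjTranspose_mul_self _
  have hY : (ρ - σ).IsHermitian := hρp.1.sub hσp.1
  have hYeq : ρ - σ = hρp.sqrt * hρp.sqrt - hσp.sqrt * hσp.sqrt := by rw [hAA, hBB]
  have core := fvg_core hρp.sqrt hσp.sqrt hAps hBps htrA htrB hN rfl hY hYeq
  set t := (herm hN.1 Real.sqrt).trace.re with ht
  have ht0 : 0 ≤ t := by
    rw [ht, herm_trace_re]
    exact Finset.sum_nonneg fun i _ => Real.sqrt_nonneg _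
  have habsps : (herm hN.1 Real.sqrt).PosSemidef :=
    herm_posSemidef hN.1 fun i => Real.sqrt_nonneg _
  have habs2 : herm hN.1 Real.sqrt * herm hN.1 Real.sqrt
      = (hσp.sqrt * hρp.sqrt)ᴴ * (hσp.sqrt * hρp.sqrt) := by
    rw [herm_mul]
    exact (herm_congr hN.1 fun i => Real.mul_self_sqrt (hN.eigenvalues_nonneg i)).trans
      (herm_id hN.1)
  have e : hρp.sqrt * σ * hρp.sqrt = (hσp.sqrt * hρp.sqrt)ᴴ * (hσp.sqrt * hρp.sqrt) := by
    conv_lhs => rw [← hBB]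
    rw [conjTranspose_mul, hAps.1, hBps.1]
    simp only [mul_assoc]
  have hps : (hρp.sqrt * σ * hρp.sqrt).PosSemidef := by rw [e]; exact hN
  have hfid : fidelity ρ σ = t ^ 2 := by
    rw [fidelity, dif_pos hρp, dif_pos hps]
    have heq : herm hN.1 Real.sqrt = hps.sqrt :=
      habsps.eq_sqrt_of_sq_eq hps (by rw [sq, habs2, e])
    rw [← heq, ht]
  have habsY2 : herm hY (fun x => |x|) ^ 2 = (ρ - σ)ᴴ * (ρ - σ) := by
    have h1 : (ρ - σ)ᴴ = ρ - σ := hY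
    rw [sq, herm_mul, h1]
    exact (herm_congr hY fun i => abs_mul_abs_self _).trans
      (((herm_mul hY (fun x => x) (fun x => x)).symm).trans
        (by rw [herm_id hY]))
  have hD : traceDist ρ σ = (herm hY (fun x => |x|)).trace.re / 2 := by
    rw [traceDist, traceNorm]
    have heq : herm hY (fun x => |x|) = (posSemidef_conjTranspose_mul_self (ρ - σ)).sqrt :=
      (herm_posSemidef hY fun i => abs_nonneg _).eq_sqrt_of_sq_eq _ habsY2
    rw [← heq]
  constructor
  · calc 1 - Real.sqrt (fidelity ρ σ) = 1 - t := by rw [hfid, Real.sqrt_sq ht0]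
      _ ≤ (herm hY (fun x => |x|)).trace.re / 2 := core.1
      _ = traceDist ρ σ := hD.symm
  · calc traceDist ρ σ = (herm hY (fun x => |x|)).trace.re / 2 := hD
      _ ≤ Real.sqrt (1 - t ^ 2) := core.2
      _ = Real.sqrt (1 - fidelity ρ σ) := by rw [hfid]
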